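/- With notation as above, the largest part of the ℓ-core λ = π(a₁,...,a_ℓ) also equals Σ_{j=1}^{i−1} (a_i − a_j) + Σ_{j=i+1}^{ℓ} (a_i − a_j − 1), where a_i is the rightmost occurrence of the maximum coordinate. -/

import Mathlib

/-- A partition: a weakly decreasing list of positive integers. -/
def IsPartition (l : List ℕ) : Prop := l.Pairwise (· ≥ ·) ∧ ∀ x ∈ l, 0 < x

/-- Hook length of the box in (0-based) row `a` and (1-based) column `c`. -/
def hook (l : List ℕ) (a c : ℕ) : ℕ :=
  (l.getD a 0 - c) + ((List.range l.length).filter (fun i => decide (a < i ∧ c ≤ l.getD i 0))).length + 1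

/-- `l` is an `ℓ`-core: no box has hook length divisible by `ℓ`. -/
def IsCore (ℓ : ℕ) (l : List ℕ) : Prop :=
  ∀ a < l.length, ∀ c, 1 ≤ c → c ≤ l.getD a 0 → ¬ (ℓ ∣ hook l a c)

/-- First-column hook lengths of `l` (the beta-numbers). -/
def betaList (l : List ℕ) : List ℕ := (List.range l.length).map (fun a => hook l a 1)

/-- Bead positions of the flush abacus with ℓ runners whose largest bead level on
runner i is `a i`. -/
def Beads (ℓ : ℕ) (a : Fin ℓ → ℤ) : Set ℤ :=
  {x | ∃ i : Fin ℓ, ∃ r : ℤ, r ≤ a i ∧ x = r * ℓ + (i : ℤ)}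

/-- The (doubly infinite) beta-number set of a partition: its first-column hook
lengths together with all negative integers. -/
def BetaSet (l : List ℕ) : Set ℤ :=
  {x | (∃ a < l.length, x = (hook l a 1 : ℤ)) ∨ x < 0}

/-- The abacus determined by `a` represents the partition `l`
(up to the normalizing shift `s`). -/
def Corresponds (ℓ : ℕ) (a : Fin ℓ → ℤ) (l : List ℕ) : Prop :=
  ∃ s : ℤ, Beads ℓ a = (fun x => x + s) '' BetaSet l

lemma length_filter_range (n a : ℕ) :
    ((List.range n).filter (fun i => decide (a < i))).length = n - (a+1) := by
  induction n with
  | zero => simp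
  | succ n ih =>
    rw [List.range_succ, List.filter_append, List.length_append, ih]
    by_cases h : a < n
    · simp [h]; omega
    · simp [h]; omega

lemma hook_one_eq (l : List ℕ) (hp : IsPartition l) (a : ℕ) (ha : a < l.length) :
    hook l a 1 = l.getD a 0 + (l.length - 1 - a) := by
  unfold hook
  have hpos : ∀ i, i < l.length → 0 < l.getD i 0 := by
    intro i hi
    rw [List.getD_eq_getElem _ _ hi]
    exact hp.2 _ (List.getElem_mem _)
  have hfc : (List.range l.length).filter (fun i => decide (a < i ∧ 1 ≤ l.getD i 0))
      = (List.range l.length).filter (fun i => decide (a < i)) := by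
    apply List.filter_congr
    intro i hi
    simp only [List.mem_range] at hi
    have := hpos i hi
    simp [decide_eq_decide, List.getD] at this ⊢
    have h1 : 1 ≤ l[i]?.getD 0 := this
    simp [h1]
  rw [hfc, length_filter_range]
  have := hpos a ha
  omega

lemma getD_mono (l : List ℕ) (hp : IsPartition l) {a b : ℕ} (hab : a ≤ b) (hb : b < l.length) :
    l.getD b 0 ≤ l.getD a 0 := by
  have ha : a < l.length := lt_of_le_of_lt hab hb
  rw [List.getD_eq_getElem _ _ ha, List.getD_eq_getElem _ _ hb]
  rcases eq_or_lt_of_le hab with rfl | h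
  · exact le_refl _
  · exact List.pairwise_iff_get.1 hp.1 ⟨a, ha⟩ ⟨b, hb⟩ h

lemma hook_strict_anti (l : List ℕ) (hp : IsPartition l) {a b : ℕ} (hab : a < b) (hb : b < l.length) :
    hook l b 1 < hook l a 1 := by
  have ha : a < l.length := lt_trans hab hb
  rw [hook_one_eq l hp a ha, hook_one_eq l hp b hb]
  have h1 := getD_mono l hp (le_of_lt hab) hb
  have h2 : 0 < l.getD b 0 := by
    rw [List.getD_eq_getElem _ _ hb]
    exact hp.2 _ (List.getElem_mem _)
  omega

lemma hook_le_hook_zero (l : List ℕ) (hp : IsPartition l) {b : ℕ} (hb : b < l.length) :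
    hook l b 1 ≤ hook l 0 1 := by
  rcases Nat.eq_zero_or_pos b with rfl | h
  · exact le_refl _
  · exact le_of_lt (hook_strict_anti l hp h hb)

lemma hook_zero_eq (l : List ℕ) (hp : IsPartition l) (hne : l ≠ []) :
    hook l 0 1 = l.headD 0 + (l.length - 1) := by
  have h0 : 0 < l.length := List.length_pos_iff.2 hne
  rw [hook_one_eq l hp 0 h0]
  cases l with
  | nil => simp at hne
  | cons x xs => simp [List.getD]

def hooksFin (l : List ℕ) : Finset ℤ := (Finset.range l.length).image (fun a => (hook l a 1 : ℤ))

noncomputable def mMax (l : List ℕ) : ℤ := if l = [] then -1 else (hook l 0 1 : ℤ)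

noncomputable def FG (l : List ℕ) : Finset ℤ := (Finset.Ico 0 (mMax l)).filter (fun x => x ∉ hooksFin l)

lemma mem_BetaSet_iff (l : List ℕ) (x : ℤ) : x ∈ BetaSet l ↔ x ∈ hooksFin l ∨ x < 0 := by
  simp only [BetaSet, Set.mem_setOf_eq, hooksFin, Finset.mem_image, Finset.mem_range]
  constructor
  · rintro (⟨a, ha, rfl⟩ | h)
    · exact Or.inl ⟨a, ha, rfl⟩
    · exact Or.inr h
  · rintro (⟨a, ha, rfl⟩ | h)
    · exact Or.inl ⟨a, ha, rfl⟩
    · exact Or.inr h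

lemma mMax_mem (l : List ℕ) : mMax l ∈ BetaSet l := by
  rw [mem_BetaSet_iff]
  unfold mMax
  by_cases h : l = []
  · simp [h]
  · simp only [h, if_false]
    left
    simp only [hooksFin, Finset.mem_image, Finset.mem_range]
    exact ⟨0, List.length_pos_iff.2 h, rfl⟩

lemma le_mMax (l : List ℕ) (hp : IsPartition l) {x : ℤ} (hx : x ∈ BetaSet l) : x ≤ mMax l := by
  rw [mem_BetaSet_iff] at hx
  unfold mMax
  by_cases h : l = []
  · subst h
    simp only [hooksFin] at hx
    simp at hx
    omega
  · simp only [h, if_false]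
    rcases hx with hx | hx
    · simp only [hooksFin, Finset.mem_image, Finset.mem_range] at hx
      obtain ⟨b, hb, rfl⟩ := hx
      exact_mod_cast hook_le_hook_zero l hp hb
    · exact le_trans (le_of_lt hx) (by positivity)

lemma mem_FG_iff (l : List ℕ) (hp : IsPartition l) (x : ℤ) :
    x ∈ FG l ↔ x < mMax l ∧ x ∉ BetaSet l := by
  simp only [FG, Finset.mem_filter, Finset.mem_Ico, mem_BetaSet_iff]
  constructor
  · rintro ⟨⟨h0, hlt⟩, hn⟩
    refine ⟨hlt, ?_⟩
    rintro (h | h)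
    · exact hn h
    · omega
  · rintro ⟨hlt, hn⟩
    push_neg at hn
    exact ⟨⟨hn.2, hlt⟩, hn.1⟩

lemma card_FG (l : List ℕ) (hp : IsPartition l) : (FG l).card = l.headD 0 := by
  by_cases h : l = []
  · subst h
    simp [FG, mMax]
  · have hlen : 0 < l.length := List.length_pos_iff.2 h
    have hm : mMax l = (hook l 0 1 : ℤ) := by simp [mMax, h]
    have hinj : Set.InjOn (fun a => (hook l a 1 : ℤ)) (Finset.range l.length) := by
      intro x hx y hy hxy
      simp only [Finset.coe_range, Set.mem_Iio] at hx hy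
      by_contra hne
      rcases Nat.lt_or_ge x y with hlt | hge
      · have := hook_strict_anti l hp hlt hy
        simp at hxy; omega
      · have hlt : y < x := by omega
        have := hook_strict_anti l hp hlt hx
        simp at hxy; omega
    have hcard : (hooksFin l).card = l.length := by
      rw [hooksFin, Finset.card_image_of_injOn hinj, Finset.card_range]
    have hsub : Finset.Ico (0:ℤ) (mMax l) ∩ hooksFin l = (hooksFin l).erase (mMax l) := by
      ext y
      simp only [Finset.mem_inter, Finset.mem_Ico, Finset.mem_erase]
      constructor
      · rintro ⟨⟨h0, hlt⟩, hy⟩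
        exact ⟨ne_of_lt hlt, hy⟩
      · rintro ⟨hne, hy⟩
        refine ⟨⟨?_, ?_⟩, hy⟩
        · simp only [hooksFin, Finset.mem_image, Finset.mem_range] at hy
          obtain ⟨b, hb, rfl⟩ := hy
          positivity
        · have := le_mMax l hp ((mem_BetaSet_iff l y).2 (Or.inl hy))
          omega
    have hmm : mMax l ∈ hooksFin l := by
      rw [hm]
      simp only [hooksFin, Finset.mem_image, Finset.mem_range]
      exact ⟨0, hlen, rfl⟩
    have : FG l = Finset.Ico (0:ℤ) (mMax l) \ (hooksFin l).erase (mMax l) := by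
      rw [← hsub]
      ext y
      simp only [FG, Finset.mem_filter, Finset.mem_sdiff, Finset.mem_inter]
      tauto
    rw [this, Finset.card_sdiff_of_subset]
    · rw [Finset.card_erase_of_mem hmm, hcard]
      have h0 : l.getD 0 0 = l.headD 0 := by cases l with | nil => simp at h | cons x xs => simp [List.getD]
      have hhz := hook_zero_eq l hp h
      have : (Finset.Ico (0:ℤ) (mMax l)).card = (hook l 0 1 : ℤ).toNat := by
        rw [hm]; simp
      rw [this]
      have hpos0 : 0 < l.headD 0 := by
        cases l with
        | nil => simp at h
        | cons x xs => exact hp.2 x List.mem_cons_self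
      omega
    · rw [← hsub]; exact Finset.inter_subset_left

section abacus

variable {ℓ : ℕ} (a : Fin ℓ → ℤ) (i : Fin ℓ)

def bBound : Fin ℓ → ℤ := fun j => if j ≤ i then a i else a i - 1

noncomputable def FB : Finset ℤ :=
  Finset.univ.biUnion (fun j : Fin ℓ => (Finset.Ioc (a j) (bBound a i j)).image (fun r => r * ℓ + (j : ℤ)))

lemma repr_uniq (hℓ : 0 < ℓ) (r r' : ℤ) (j j' : Fin ℓ)
    (h : r * ℓ + (j : ℤ) = r' * ℓ + (j' : ℤ)) : j = j' ∧ r = r' := by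
  have hj : ((j : ℤ) + r * ℓ) % ℓ = (j : ℤ) := by
    rw [Int.add_mul_emod_self_right]
    exact Int.emod_eq_of_lt (by positivity) (by exact_mod_cast j.isLt)
  have hj' : ((j' : ℤ) + r' * ℓ) % ℓ = (j' : ℤ) := by
    rw [Int.add_mul_emod_self_right]
    exact Int.emod_eq_of_lt (by positivity) (by exact_mod_cast j'.isLt)
  have hjj : (j : ℤ) = (j' : ℤ) := by
    rw [← hj, ← hj']
    congr 1
    omega
  have hje : j = j' := by
    apply Fin.ext
    exact_mod_cast hjj
  refine ⟨hje, ?_⟩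
  have : r * ℓ = r' * ℓ := by omega
  have hℓ' : (ℓ : ℤ) ≠ 0 := by positivity
  exact mul_right_cancel₀ hℓ' this

lemma le_M (hmax : ∀ j, a j ≤ a i) (hright : ∀ j, i < j → a j < a i)
    {x : ℤ} (hx : x ∈ Beads ℓ a) : x ≤ a i * ℓ + (i : ℤ) := by
  obtain ⟨j, r, hr, rfl⟩ := hx
  by_cases hij : j ≤ i
  · have h1 : r * ℓ ≤ a i * ℓ := by
      apply mul_le_mul_of_nonneg_right (le_trans hr (hmax j)) (by positivity)
    have h2 : (j : ℤ) ≤ (i : ℤ) := by exact_mod_cast hij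
    omega
  · push_neg at hij
    have hji := hright j hij
    have h1 : r * ℓ ≤ (a i - 1) * ℓ := by
      apply mul_le_mul_of_nonneg_right (by omega) (by positivity)
    have h2 : (j : ℤ) < ℓ := by exact_mod_cast j.isLt
    have h3 : (0:ℤ) ≤ (i : ℤ) := by positivity
    have : (a i - 1) * ℓ = a i * ℓ - ℓ := by ring
    omega

lemma mem_FB_iff (hℓ : 0 < ℓ) (hmax : ∀ j, a j ≤ a i) (hright : ∀ j, i < j → a j < a i) (x : ℤ) :
    x ∈ FB a i ↔ x < a i * ℓ + (i : ℤ) ∧ x ∉ Beads ℓ a := by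
  have hℓz : (0:ℤ) < (ℓ:ℤ) := by exact_mod_cast hℓ
  simp only [FB, Finset.mem_biUnion, Finset.mem_univ, true_and, Finset.mem_image, Finset.mem_Ioc]
  constructor
  · rintro ⟨j, r, ⟨hr1, hr2⟩, rfl⟩
    constructor
    · by_cases hij : j ≤ i
      · have hne : j ≠ i := by
          rintro rfl
          rw [bBound, if_pos (le_refl _)] at hr2
          omega
        have hji : j < i := lt_of_le_of_ne hij hne
        rw [bBound, if_pos hij] at hr2
        have h1 : r * ℓ ≤ a i * ℓ := mul_le_mul_of_nonneg_right hr2 (le_of_lt hℓz)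
        have h2 : (j : ℤ) < (i : ℤ) := by exact_mod_cast hji
        omega
      · rw [bBound, if_neg hij] at hr2
        have h1 : r * ℓ ≤ (a i - 1) * ℓ := mul_le_mul_of_nonneg_right hr2 (le_of_lt hℓz)
        have h2 : (j : ℤ) < ℓ := by exact_mod_cast j.isLt
        have h3 : (0:ℤ) ≤ (i : ℤ) := by positivity
        have : (a i - 1) * ℓ = a i * ℓ - ℓ := by ring
        omega
    · rintro ⟨j', r', hr', heq⟩
      obtain ⟨rfl, rfl⟩ := repr_uniq hℓ r' r j' j heq.symm
      omega
  · rintro ⟨hlt, hnb⟩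
    set r : ℤ := x / ℓ with hr
    set j' : ℤ := x % ℓ with hj'
    have hj'0 : 0 ≤ j' := Int.emod_nonneg x (by omega)
    have hj'ℓ : j' < ℓ := Int.emod_lt_of_pos x hℓz
    have hxe : x = r * ℓ + j' := by
      rw [hr, hj', mul_comm]
      exact (Int.mul_ediv_add_emod x ℓ).symm
    have hjlt : j'.toNat < ℓ := by omega
    set j : Fin ℓ := ⟨j'.toNat, hjlt⟩ with hj
    have hjc : (j : ℤ) = j' := by simp [hj]; omega
    refine ⟨j, r, ⟨?_, ?_⟩, by rw [hxe, hjc]⟩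
    · by_contra hcon
      push_neg at hcon
      exact hnb ⟨j, r, hcon, by rw [hxe, hjc]⟩
    · rw [bBound]
      by_cases hij : j ≤ i
      · rw [if_pos hij]
        have h2 : (j : ℤ) ≤ (i : ℤ) := by exact_mod_cast hij
        have : r * ℓ < (a i + 1) * ℓ := by
          have : (a i + 1) * ℓ = a i * ℓ + ℓ := by ring
          omega
        have := lt_of_mul_lt_mul_right this (le_of_lt hℓz)
        omega
      · rw [if_neg hij]
        push_neg at hij
        have h2 : (i : ℤ) < (j : ℤ) := by exact_mod_cast hij
        have : r * ℓ < a i * ℓ := by omega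
        have := lt_of_mul_lt_mul_right this (le_of_lt hℓz)
        omega

lemma card_FB (hℓ : 0 < ℓ) :
    ((FB a i).card : ℤ) = ∑ j : Fin ℓ, (bBound a i j - a j).toNat := by
  rw [FB, Finset.card_biUnion]
  · push_cast
    congr 1
    ext j
    rw [Finset.card_image_of_injective _ (fun r r' h => by
      have : r * ℓ = r' * ℓ := by omega
      exact mul_right_cancel₀ (by positivity : (ℓ:ℤ) ≠ 0) this)]
    simp [Int.toNat_of_nonneg]
  · intro j _ j' _ hjj
    apply Finset.disjoint_left.2
    rintro x hx hx'
    simp only [Finset.mem_image, Finset.mem_Ioc] at hx hx'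
    obtain ⟨r, _, rfl⟩ := hx
    obtain ⟨r', _, heq⟩ := hx'
    exact hjj (repr_uniq hℓ r' r j' j heq).1.symm

end abacus


/-- λ₁ = Σ_{j<i} (a_i - a_j) + Σ_{j>i} (a_i - a_j - 1), where a_i is the rightmost
maximum coordinate of the balanced flush abacus vector of the ℓ-core l. -/
theorem stmt8 (ℓ : ℕ) (hℓ : 2 ≤ ℓ) (a : Fin ℓ → ℤ) (ha : ∑ i, a i = 0)
    (l : List ℕ) (hp : IsPartition l) (hc : IsCore ℓ l) (hcor : Corresponds ℓ a l)
    (i : Fin ℓ) (hmax : ∀ j, a j ≤ a i) (hright : ∀ j, i < j → a j < a i) :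
    (l.headD 0 : ℤ) =
      (∑ j ∈ Finset.univ.filter (fun j => j < i), (a i - a j)) +
      (∑ j ∈ Finset.univ.filter (fun j => i < j), (a i - a j - 1)) := by
  obtain ⟨s, hs⟩ := hcor
  have hℓ0 : 0 < ℓ := by omega
  set M := a i * ℓ + (i : ℤ) with hMdef
  have hM_mem : M ∈ Beads ℓ a := ⟨i, a i, le_refl _, rfl⟩
  have hMs : M = mMax l + s := by
    have h1 : M - s ∈ BetaSet l := by
      rw [hs] at hM_mem
      obtain ⟨y, hy, hxy⟩ := hM_mem
      have : y = M - s := by simp only at hxy; omega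
      rwa [← this]
    have h2 : mMax l + s ∈ Beads ℓ a := by
      rw [hs]; exact ⟨mMax l, mMax_mem l, rfl⟩
    have h3 := le_mMax l hp h1
    have h4 := le_M a i hmax hright h2
    omega
  have hFB_eq : FB a i = (FG l).image (fun x => x + s) := by
    ext x
    rw [mem_FB_iff a i hℓ0 hmax hright]
    simp only [Finset.mem_image]
    constructor
    · rintro ⟨hlt, hnb⟩
      refine ⟨x - s, ?_, by ring⟩
      rw [mem_FG_iff l hp]
      refine ⟨by omega, ?_⟩
      intro hbs
      apply hnb
      rw [hs]
      exact ⟨x - s, hbs, by ring⟩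
    · rintro ⟨y, hy, rfl⟩
      rw [mem_FG_iff l hp] at hy
      refine ⟨by omega, ?_⟩
      rw [hs]
      rintro ⟨z, hz, hzz⟩
      simp only at hzz
      have : z = y := by omega
      exact hy.2 (this ▸ hz)
  have hcards : ((l.headD 0 : ℕ) : ℤ) = ∑ j : Fin ℓ, ((bBound a i j - a j).toNat : ℤ) := by
    rw [← card_FG l hp]
    have : (FG l).card = (FB a i).card := by
      rw [hFB_eq, Finset.card_image_of_injective _ (add_left_injective s)]
    rw [this, card_FB a i hℓ0]
    push_cast
    rfl
  have htn : ∀ j, ((bBound a i j - a j).toNat : ℤ) = bBound a i j - a j := by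
    intro j
    apply Int.toNat_of_nonneg
    rw [bBound]
    split
    · have := hmax j; omega
    · next h =>
      have := hright j (lt_of_not_ge h)
      omega
  rw [hcards, Finset.sum_congr rfl (fun j _ => htn j)]
  rw [← Finset.sum_filter_add_sum_filter_not Finset.univ (fun j => j < i)]
  congr 1
  · apply Finset.sum_congr rfl
    intro j hj
    simp only [Finset.mem_filter] at hj
    rw [bBound, if_pos (le_of_lt hj.2)]
  · have hset : Finset.univ.filter (fun j => ¬ j < i) = insert i (Finset.univ.filter (fun j => i < j)) := by
      ext j
      simp only [Finset.mem_filter, Finset.mem_insert, Finset.mem_univ, true_and, not_lt]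
      constructor
      · intro h
        rcases eq_or_lt_of_le h with h | h
        · exact Or.inl h.symm
        · exact Or.inr h
      · rintro (rfl | h)
        · exact le_refl _
        · exact le_of_lt h
    rw [hset, Finset.sum_insert (by simp)]
    rw [bBound]
    simp only [if_pos (le_refl i), sub_self, zero_add]
    apply Finset.sum_congr rfl
    intro j hj
    simp only [Finset.mem_filter] at hj
    rw [bBound, if_neg (not_le.2 hj.2)]
    ring
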